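/- Let B = (U ∪ R, E) be a bipartite graph in which every vertex has degree at most 2. Then there exists a matching in B that covers every vertex of U if and only if B contains no maximal path that starts and ends in U (i.e., no path both of whose endpoints are in U and which cannot be extended). -/

import Mathlib

/-- Degree of a vertex `u ∈ U` in the bipartite graph with parts `U`, `R`
and adjacency `E`. -/
def degU {U R : Type} [Fintype R] (E : U → R → Bool) (u : U) : ℕ :=
  (Finset.univ.filter fun r => E u r = true).card

/-- Degree of a vertex `r ∈ R`. -/
def degR {U R : Type} [Fintype U] (E : U → R → Bool) (r : R) : ℕ :=
  (Finset.univ.filter fun u => E u r = true).card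

/-- There is a maximal path in the bipartite graph both of whose endpoints lie in `U`:
a sequence `u 0, r 0, u 1, r 1, …, r (k-1), u k` of pairwise distinct vertices with
consecutive vertices adjacent, such that every neighbour of the first and of the last
vertex already lies on the path (so the path cannot be extended). -/
def HasMaxUUPath {U R : Type} (E : U → R → Bool) : Prop :=
  ∃ (k : ℕ) (u : Fin (k+1) → U) (r : Fin k → R),
    Function.Injective u ∧ Function.Injective r ∧
    (∀ i : Fin k, E (u i.castSucc) (r i) = true ∧ E (u i.succ) (r i) = true) ∧
    (∀ x : R, E (u 0) x = true → ∃ i, r i = x) ∧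
    (∀ x : R, E (u (Fin.last k)) x = true → ∃ i, r i = x)

/-- There is a matching covering every vertex of `U`. -/
def CoversU {U R : Type} (E : U → R → Bool) : Prop :=
  ∃ m : U → R, Function.Injective m ∧ ∀ u, E u (m u) = true

/-- A vertex `u` with two distinct neighbours and degree at most 2 has exactly those
two neighbours. -/
lemma two_nbrsU {U R : Type} [Fintype R] [DecidableEq R] (E : U → R → Bool) {u : U} {r1 r2 : R}
    (h1 : E u r1 = true) (h2 : E u r2 = true) (hne : r1 ≠ r2) (hd : degU E u ≤ 2) :
    ∀ x, E u x = true → x = r1 ∨ x = r2 := by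
  intro x hx
  have hsub : ({r1, r2} : Finset R) ⊆ Finset.univ.filter fun r => E u r = true := by
    intro y hy
    simp only [Finset.mem_insert, Finset.mem_singleton] at hy
    rcases hy with rfl | rfl <;> simp [h1, h2]
  have hcard : (Finset.univ.filter fun r => E u r = true).card ≤ ({r1, r2} : Finset R).card := by
    rw [Finset.card_pair hne]; exact hd
  have := Finset.eq_of_subset_of_card_le hsub hcard
  have hx' : x ∈ ({r1, r2} : Finset R) := by
    rw [this]; simp [hx]
  simpa using hx'

/-- A matching covering `U` rules out a maximal `U`–`U` path, by pigeonhole. -/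
lemma dir1 {U R : Type} [Fintype U] [Fintype R] [DecidableEq U] [DecidableEq R]
    (E : U → R → Bool) (hU : ∀ u, degU E u ≤ 2) (hC : CoversU E) : ¬ HasMaxUUPath E := by
  rintro ⟨k, u, r, hu, hr, hadj, h0, hl⟩
  obtain ⟨m, hm, hme⟩ := hC
  have hex : ∀ i : Fin (k+1), ∃ j : Fin k, r j = m (u i) := by
    intro i
    by_cases hi0 : i = 0
    · exact h0 _ (hi0 ▸ hme (u i))
    by_cases hil : i = Fin.last k
    · exact hl _ (hil ▸ hme (u i))
    have hpos : 0 < i.val := Nat.pos_of_ne_zero (fun h => hi0 (Fin.ext h))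
    have hlt : i.val < k := lt_of_le_of_ne (Nat.lt_succ_iff.mp i.isLt)
      (fun h => hil (Fin.ext h))
    set j1 : Fin k := ⟨i.val - 1, by omega⟩
    set j2 : Fin k := ⟨i.val, hlt⟩
    have hij1 : j1.succ = i := by
      apply Fin.ext; simp [j1, Fin.val_succ]; omega
    have hij2 : j2.castSucc = i := by apply Fin.ext; simp [j2]
    have e1 : E (u i) (r j1) = true := by rw [← hij1]; exact (hadj j1).2
    have e2 : E (u i) (r j2) = true := by rw [← hij2]; exact (hadj j2).1
    have hne : r j1 ≠ r j2 := by
      intro h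
      have : j1 = j2 := hr h
      apply_fun Fin.val at this
      simp [j1, j2] at this; omega
    rcases two_nbrsU E e1 e2 hne (hU (u i)) (m (u i)) (hme (u i)) with h | h
    · exact ⟨j1, h.symm⟩
    · exact ⟨j2, h.symm⟩
  choose g hg using hex
  have hginj : Function.Injective g := by
    intro a b hab
    have : m (u a) = m (u b) := by rw [← hg a, ← hg b, hab]
    exact hu (hm this)
  have := Fintype.card_le_of_injective g hginj
  simp at this

/-- `Fin.snoc` of an injective function with a fresh element is injective. -/
lemma snoc_inj {n : ℕ} {α : Type} {f : Fin n → α} {a : α}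
    (hf : Function.Injective f) (ha : ∀ i, f i ≠ a) :
    Function.Injective (Fin.snoc f a : Fin (n+1) → α) := by
  intro i j hij
  induction i using Fin.lastCases with
  | last =>
    induction j using Fin.lastCases with
    | last => rfl
    | cast j =>
      rw [Fin.snoc_last, Fin.snoc_castSucc] at hij
      exact absurd hij.symm (ha j)
  | cast i =>
    induction j using Fin.lastCases with
    | last =>
      rw [Fin.snoc_last, Fin.snoc_castSucc] at hij
      exact absurd hij (ha i)
    | cast j =>
      rw [Fin.snoc_castSucc, Fin.snoc_castSucc] at hij
      exact congrArg Fin.castSucc (hf hij)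

section
variable {U R : Type} [Fintype U] [Fintype R] [DecidableEq U] [DecidableEq R]

/-- A "good path": injective, alternating, and non-extendable at the left endpoint. -/
def GoodPath (E : U → R → Bool) (k : ℕ) (u : Fin (k+1) → U) (r : Fin k → R) : Prop :=
  Function.Injective u ∧ Function.Injective r ∧
    (∀ i : Fin k, E (u i.castSucc) (r i) = true ∧ E (u i.succ) (r i) = true) ∧
    (∀ x : R, E (u 0) x = true → ∃ i, r i = x)

/-- An `R`-vertex of degree two adjacent to `u0` has another neighbour. -/
lemma other_nbr (E : U → R → Bool) {x : R} {u0 : U} (hd : degR E x = 2)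
    (h0 : E u0 x = true) : ∃ u1, E u1 x = true ∧ u1 ≠ u0 := by
  classical
  have h0' : u0 ∈ Finset.univ.filter fun u => E u x = true := by simp [h0]
  simp only [degR] at hd
  have : ((Finset.univ.filter fun u => E u x = true).erase u0).card = 1 := by
    rw [Finset.card_erase_of_mem h0', hd]
  obtain ⟨u1, hu1⟩ := Finset.card_eq_one.mp this
  have : u1 ∈ (Finset.univ.filter fun u => E u x = true).erase u0 := by simp [hu1]
  rw [Finset.mem_erase, Finset.mem_filter] at this
  exact ⟨u1, this.2.2, this.1⟩

/-- When no `R`-vertex has degree 1 and there is no maximal `U`–`U` path, a good path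
can always be extended one more step. -/
lemma grow (E : U → R → Bool) (hU : ∀ u, degU E u ≤ 2)
    (hR1 : ∀ x, degR E x ≠ 1) (hR : ∀ x, degR E x ≤ 2)
    (hP : ¬ HasMaxUUPath E) (k : ℕ) (u : Fin (k+1) → U) (r : Fin k → R)
    (hG : GoodPath E k u r) :
    ∃ (u' : Fin (k+2) → U) (r' : Fin (k+1) → R), GoodPath E (k+1) u' r' := by
  obtain ⟨hu, hr, hadj, h0⟩ := hG
  have hnotmax : ¬ (∀ x : R, E (u (Fin.last k)) x = true → ∃ i, r i = x) := by
    intro h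
    exact hP ⟨k, u, r, hu, hr, hadj, h0, h⟩
  push_neg at hnotmax
  obtain ⟨x, hx1, hx2⟩ := hnotmax
  have hdx : degR E x = 2 := by
    have h1 : 0 < degR E x := by
      simp only [degR]
      exact Finset.card_pos.mpr ⟨u (Fin.last k), by simp [hx1]⟩
    have := hR x; have := hR1 x; omega
  obtain ⟨unew, hunew, hne⟩ := other_nbr E hdx hx1
  have hfresh : ∀ j : Fin (k+1), u j ≠ unew := by
    intro j hj
    by_cases hjl : j = Fin.last k
    · exact hne (by rw [← hj, hjl])
    by_cases hj0 : j = 0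
    · obtain ⟨i, hi⟩ := h0 x (by rw [← hj0, hj]; exact hunew)
      exact hx2 i hi
    · have hpos : 0 < j.val := Nat.pos_of_ne_zero (fun h => hj0 (Fin.ext h))
      have hlt : j.val < k := lt_of_le_of_ne (Nat.lt_succ_iff.mp j.isLt)
        (fun h => hjl (Fin.ext h))
      set j1 : Fin k := ⟨j.val - 1, by omega⟩
      set j2 : Fin k := ⟨j.val, hlt⟩
      have hij1 : j1.succ = j := by apply Fin.ext; simp [j1, Fin.val_succ]; omega
      have hij2 : j2.castSucc = j := by apply Fin.ext; simp [j2]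
      have e1 : E (u j) (r j1) = true := by rw [← hij1]; exact (hadj j1).2
      have e2 : E (u j) (r j2) = true := by rw [← hij2]; exact (hadj j2).1
      have hner : r j1 ≠ r j2 := by
        intro h
        have : j1 = j2 := hr h
        apply_fun Fin.val at this
        simp [j1, j2] at this; omega
      have hux : E (u j) x = true := by rw [hj]; exact hunew
      rcases two_nbrsU E e1 e2 hner (hU (u j)) x hux with h | h
      · exact hx2 j1 h.symm
      · exact hx2 j2 h.symm
  refine ⟨Fin.snoc u unew, Fin.snoc r x, snoc_inj hu hfresh,
    snoc_inj hr (fun i h => hx2 i h), ?_, ?_⟩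
  · intro i
    induction i using Fin.lastCases with
    | last =>
      constructor
      · simp only [Fin.snoc_castSucc, Fin.snoc_last]
        exact hx1
      · rw [Fin.succ_last]
        simp only [Fin.snoc_last]
        exact hunew
    | cast j =>
      constructor
      · simp only [Fin.snoc_castSucc]
        exact (hadj j).1
      · rw [Fin.succ_castSucc]
        simp only [Fin.snoc_castSucc]
        exact (hadj j).2
  · intro y hy
    have h00 : (Fin.snoc u unew : Fin (k+2) → U) 0 = u 0 := by
      rw [show (0 : Fin (k+2)) = Fin.castSucc 0 by simp, Fin.snoc_castSucc]
    rw [h00] at hy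
    obtain ⟨i, hi⟩ := h0 y hy
    exact ⟨i.castSucc, by rw [Fin.snoc_castSucc]; exact hi⟩

/-- If no `R`-vertex has degree 1 and there is no maximal `U`–`U` path, then every
`U`-vertex has degree exactly 2. -/
lemma deg_two (E : U → R → Bool) (hU : ∀ u, degU E u ≤ 2)
    (hR1 : ∀ x, degR E x ≠ 1) (hR : ∀ x, degR E x ≤ 2)
    (hP : ¬ HasMaxUUPath E) : ∀ u, degU E u = 2 := by
  intro u
  rcases Nat.lt_or_ge (degU E u) 2 with h | h
  · exfalso
    interval_cases hdeg : degU E u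
    · -- degree 0 : u alone is a maximal UU path
      apply hP
      refine ⟨0, fun _ => u, Fin.elim0,
        fun a b _ => by (have := a.isLt; have := b.isLt; exact Fin.ext (by omega)),
        fun a => a.elim0, fun i => i.elim0, ?_, ?_⟩ <;>
      · intro x hx
        exfalso
        have hmem : x ∈ Finset.univ.filter fun r => E u r = true := by simp [hx]
        have : (Finset.univ.filter fun r => E u r = true).card = 0 := hdeg
        rw [Finset.card_eq_zero] at this
        simp [this] at hmem
    · -- degree 1 : good paths could be grown forever
      simp only [degU] at hdeg
      obtain ⟨r0, hr0⟩ := Finset.card_eq_one.mp hdeg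
      have her0 : E u r0 = true := by
        have : r0 ∈ Finset.univ.filter fun r => E u r = true := by simp [hr0]
        simpa using this
      have huniq : ∀ x, E u x = true → x = r0 := by
        intro x hx
        have : x ∈ Finset.univ.filter fun r => E u r = true := by simp [hx]
        rw [hr0] at this; simpa using this
      have hdr0 : degR E r0 = 2 := by
        have h1 : 0 < degR E r0 := by
          simp only [degR]
          exact Finset.card_pos.mpr ⟨u, by simp [her0]⟩
        have := hR r0; have := hR1 r0; omega
      obtain ⟨u1, hu1, hneu⟩ := other_nbr E hdr0 her0
      have base : ∃ (uu : Fin 2 → U) (rr : Fin 1 → R), GoodPath E 1 uu rr := by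
        refine ⟨![u, u1], ![r0], ?_, ?_, ?_, ?_⟩
        · intro a b hab
          fin_cases a <;> fin_cases b <;> simp_all <;>
            first
              | rfl
              | (exfalso; exact hneu hab.symm)
              | (exfalso; exact hneu hab)
        · intro a b _; have := a.isLt; have := b.isLt; exact Fin.ext (by omega)
        · intro i
          fin_cases i
          constructor
          · simpa using her0
          · simpa using hu1
        · intro x hx
          exact ⟨0, (huniq x (by simpa using hx)).symm⟩
      have all : ∀ n, ∃ (uu : Fin (n+2) → U) (rr : Fin (n+1) → R), GoodPath E (n+1) uu rr := by
        intro n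
        induction n with
        | zero => exact base
        | succ m ih =>
          obtain ⟨uu, rr, hG⟩ := ih
          exact grow E hU hR1 hR hP _ uu rr hG
      obtain ⟨uu, rr, _, hrinj, _, _⟩ := all (Fintype.card R)
      have := Fintype.card_le_of_injective rr hrinj
      simp at this
  · exact le_antisymm (hU u) h

/-- Hall's condition, via double counting, when every vertex of `U` has degree exactly 2
and every vertex of `R` has degree at most 2. -/
lemma hall_cond (E : U → R → Bool) (hR : ∀ r, degR E r ≤ 2)
    (h2 : ∀ u, degU E u = 2) (S : Finset U) :
    S.card ≤ (S.biUnion fun u => Finset.univ.filter fun r => E u r = true).card := by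
  classical
  set T := S.biUnion fun u => Finset.univ.filter fun r => E u r = true with hT
  have key : ∀ u ∈ S, (T.filter fun r => E u r = true).card = 2 := by
    intro u hu
    have hsub : (Finset.univ.filter fun r => E u r = true) ⊆ T := by
      intro y hy
      rw [hT, Finset.mem_biUnion]
      exact ⟨u, hu, hy⟩
    have : T.filter (fun r => E u r = true) = Finset.univ.filter fun r => E u r = true := by
      apply Finset.Subset.antisymm
      · intro y hy
        rw [Finset.mem_filter] at hy
        simp [hy.2]
      · intro y hy
        rw [Finset.mem_filter]
        exact ⟨hsub hy, by simpa using hy⟩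
    rw [this]
    exact h2 u
  have count : ∑ u ∈ S, (T.filter fun r => E u r = true).card
      = ∑ r ∈ T, (S.filter fun u => E u r = true).card := by
    simp only [Finset.card_filter]
    rw [Finset.sum_comm]
  have lhs : ∑ u ∈ S, (T.filter fun r => E u r = true).card = 2 * S.card := by
    rw [Finset.sum_congr rfl key]
    simp [mul_comm]
  have rhs : ∑ r ∈ T, (S.filter fun u => E u r = true).card ≤ 2 * T.card := by
    calc ∑ r ∈ T, (S.filter fun u => E u r = true).card
        ≤ ∑ r ∈ T, 2 := by
          apply Finset.sum_le_sum
          intro r _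
          calc (S.filter fun u => E u r = true).card
              ≤ (Finset.univ.filter fun u => E u r = true).card := by
                apply Finset.card_le_card
                intro y hy
                rw [Finset.mem_filter] at hy ⊢
                exact ⟨Finset.mem_univ y, hy.2⟩
            _ ≤ 2 := hR r
      _ = 2 * T.card := by simp [mul_comm]
  omega

end

set_option maxHeartbeats 1000000 in
/-- Main induction: removing a degree-1 `R`-vertex together with its unique neighbour,
or applying Hall's theorem when no such vertex exists. -/
lemma key : ∀ (n : ℕ) {U R : Type} [Fintype U] [Fintype R] [DecidableEq U] [DecidableEq R]
    (E : U → R → Bool), Fintype.card U ≤ n → (∀ u, degU E u ≤ 2) → (∀ r, degR E r ≤ 2) →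
    ¬ HasMaxUUPath E → (∃ m : U → R, Function.Injective m ∧ ∀ u, E u (m u) = true) := by
  intro n
  induction n with
  | zero =>
    intro U R _ _ _ _ E hcard _ _ _
    have : IsEmpty U := Fintype.card_eq_zero_iff.mp (Nat.le_zero.mp hcard)
    exact ⟨fun u => isEmptyElim u, fun a b _ => isEmptyElim a, fun u => isEmptyElim u⟩
  | succ n ih =>
    intro U R _ _ _ _ E hcard hU hR hP
    by_cases hex : ∃ r0, degR E r0 = 1
    · -- reduction step: match the degree-1 R vertex with its unique neighbour
      obtain ⟨r0, hd1⟩ := hex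
      simp only [degR] at hd1
      obtain ⟨u0, hu0⟩ := Finset.card_eq_one.mp hd1
      have heu0 : E u0 r0 = true := by
        have : u0 ∈ Finset.univ.filter fun u => E u r0 = true := by simp [hu0]
        simpa using this
      have huniq : ∀ u, E u r0 = true → u = u0 := by
        intro u hu
        have : u ∈ Finset.univ.filter fun v => E v r0 = true := by simp [hu]
        rw [hu0] at this; simpa using this
      set U' := {x : U // x ≠ u0} with hU'def
      set E' : U' → R → Bool := fun u r => E u.1 r && decide (r ≠ r0) with hE'def
      have hcard' : Fintype.card U' ≤ n := by
        have h1 : Fintype.card U' = Fintype.card U - 1 := by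
          show Fintype.card {x : U // x ≠ u0} = _
          rw [Fintype.card_subtype_compl, Fintype.card_subtype_eq]
        have h2 : 1 ≤ Fintype.card U := Fintype.card_pos_iff.mpr ⟨u0⟩
        omega
      have hU2 : ∀ u : U', degU E' u ≤ 2 := by
        intro u
        refine le_trans (Finset.card_le_card ?_) (hU u.1)
        intro y hy
        simp only [Finset.mem_filter, hE'def, Bool.and_eq_true, decide_eq_true_eq] at hy ⊢
        exact ⟨Finset.mem_univ y, hy.2.1⟩
      have hR2 : ∀ r : R, degR E' r ≤ 2 := by
        intro r
        refine le_trans ?_ (hR r)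
        apply Finset.card_le_card_of_injOn (fun u => u.1)
        · intro a ha
          simp only [Finset.mem_filter, hE'def, Bool.and_eq_true] at ha ⊢
          exact Finset.mem_filter.mpr ⟨Finset.mem_univ _, (Finset.mem_filter.mp ha).2.1⟩
        · exact fun a _ b _ h => Subtype.ext h
      have hP2 : ¬ HasMaxUUPath E' := by
        rintro ⟨k, u, r, hu, hr, hadj, h0, hl⟩
        apply hP
        refine ⟨k, fun i => (u i).1, r, ?_, hr, ?_, ?_, ?_⟩
        · intro a b hab
          exact hu (Subtype.ext hab)
        · intro i
          have h1 := (hadj i).1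
          have h2 := (hadj i).2
          simp only [hE'def, Bool.and_eq_true, decide_eq_true_eq] at h1 h2
          exact ⟨h1.1, h2.1⟩
        · intro x hx
          by_cases hxr : x = r0
          · exact absurd (huniq _ (hxr ▸ hx)) (u 0).2
          · apply h0
            simp only [hE'def, Bool.and_eq_true, decide_eq_true_eq]
            exact ⟨hx, hxr⟩
        · intro x hx
          by_cases hxr : x = r0
          · exact absurd (huniq _ (hxr ▸ hx)) (u (Fin.last k)).2
          · apply hl
            simp only [hE'def, Bool.and_eq_true, decide_eq_true_eq]
            exact ⟨hx, hxr⟩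
      obtain ⟨m', hm'inj, hm'e⟩ := ih E' hcard' hU2 hR2 hP2
      have hm'ne : ∀ u : U', m' u ≠ r0 := by
        intro u
        have := hm'e u
        simp only [hE'def, Bool.and_eq_true, decide_eq_true_eq] at this
        exact this.2
      have hm'E : ∀ u : U', E u.1 (m' u) = true := by
        intro u
        have := hm'e u
        simp only [hE'def, Bool.and_eq_true, decide_eq_true_eq] at this
        exact this.1
      refine ⟨fun x => if h : x = u0 then r0 else m' ⟨x, h⟩, ?_, ?_⟩
      · intro a b hab
        by_cases ha : a = u0
        · by_cases hb : b = u0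
          · rw [ha, hb]
          · simp only [dif_pos ha, dif_neg hb] at hab
            exact absurd hab.symm (hm'ne ⟨b, hb⟩)
        · by_cases hb : b = u0
          · simp only [dif_neg ha, dif_pos hb] at hab
            exact absurd hab (hm'ne ⟨a, ha⟩)
          · simp only [dif_neg ha, dif_neg hb] at hab
            exact congrArg Subtype.val (hm'inj hab)
      · intro x
        by_cases h : x = u0
        · simp only [dif_pos h, h]; exact heu0
        · simp only [dif_neg h]; exact hm'E ⟨x, h⟩
    · -- no degree-1 R vertex : Hall's theorem via counting
      push_neg at hex
      have h2 := deg_two E hU hex hR hP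
      have hall := hall_cond E hR h2
      obtain ⟨f, hfinj, hfmem⟩ :=
        (Finset.all_card_le_biUnion_card_iff_exists_injective
          (fun u => Finset.univ.filter fun r => E u r = true)).mp hall
      exact ⟨f, hfinj, fun u => by simpa using hfmem u⟩

/-- In a bipartite graph `B = (U ∪ R, E)` in which every vertex has
degree at most 2, there exists a matching covering every vertex of `U` if and only if
`B` contains no maximal path that starts and ends in `U`. -/
theorem stmt_0 {U R : Type} [Fintype U] [Fintype R] [DecidableEq U] [DecidableEq R]
    (E : U → R → Bool) (hU : ∀ u, degU E u ≤ 2) (hR : ∀ r, degR E r ≤ 2) :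
    CoversU E ↔ ¬ HasMaxUUPath E := by
  constructor
  · exact fun h => dir1 E hU h
  · exact fun h => key (Fintype.card U) E le_rfl hU hR h
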